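/- arXiv:2010.03676 — 4 statements merged into one kernel-verified Lean document; each statement's English description precedes it below -/
import Mathlib

section
/- Let A be a closable subgroup of a group Γ, and let B be a non-trivial subgroup of A. Then the normalizer of B in Γ is contained in clo(A). -/
/-- The rank of a subgroup, as an extended natural number: the minimal cardinality of a
finite generating set, or `⊤` if the subgroup is not finitely generated. -/
noncomputable def subgroupRank {Γ : Type*} [Group Γ] (H : Subgroup Γ) : ℕ∞ :=
  ⨅ (S : Finset Γ) (_ : Subgroup.closure (S : Set Γ) = H), (S.card : ℕ∞)

/-- `A` has local rank at most `r` if every finitely generated subgroup of `A` is contained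
in a subgroup of `A` of rank at most `r`. -/
def LocalRankLE {Γ : Type*} [Group Γ] (A : Subgroup Γ) (r : ℕ) : Prop :=
  ∀ B : Subgroup Γ, B ≤ A → B.FG →
    ∃ C : Subgroup Γ, C ≤ A ∧ B ≤ C ∧ subgroupRank C ≤ (r : ℕ∞)

/-- The local rank of a subgroup: the least `r` such that `LocalRankLE A r`, or `⊤` if
there is no such `r`. -/
noncomputable def localRank {Γ : Type*} [Group Γ] (A : Subgroup Γ) : ℕ∞ :=
  ⨅ (r : ℕ) (_ : LocalRankLE A r), (r : ℕ∞)

/-- A group is `k`-free if every subgroup of rank at most `k` is free. -/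
def KFree (Γ : Type*) [Group Γ] (k : ℕ) : Prop :=
  ∀ H : Subgroup Γ, subgroupRank H ≤ (k : ℕ∞) → IsFreeGroup H

/-- The index of freedom of `Γ`: the supremum of all `k` such that `Γ` is `k`-free. -/
noncomputable def iof (Γ : Type*) [Group Γ] : ℕ∞ :=
  ⨆ (k : ℕ) (_ : KFree Γ k), (k : ℕ∞)

/-- A subgroup `A` of `Γ` is strongly closable if `localRank A < iof Γ`. -/
def StronglyClosable {Γ : Type*} [Group Γ] (A : Subgroup Γ) : Prop :=
  localRank A < iof Γ

/-- A subgroup `A` of `Γ` is closable if it has finite local rank and there is some `z ∈ Γ`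
with `localRank ⟨A, z⟩ < iof Γ`. -/
def Closable {Γ : Type*} [Group Γ] (A : Subgroup Γ) : Prop :=
  localRank A < ⊤ ∧ ∃ z : Γ, localRank (A ⊔ Subgroup.closure {z}) < iof Γ

/-- An element `x` of `Γ` is `A`-admissible if `⟨A, x⟩` is strongly closable and
`localRank ⟨A, x⟩ ≤ localRank A`. -/
def Admissible {Γ : Type*} [Group Γ] (A : Subgroup Γ) (x : Γ) : Prop :=
  StronglyClosable (A ⊔ Subgroup.closure {x}) ∧
    localRank (A ⊔ Subgroup.closure {x}) ≤ localRank A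

/-- A sequence `x₁, …, x_m` is `A`-admissible if each `x_i` is `⟨A, x₁, …, x_{i-1}⟩`-admissible. -/
def AdmissibleSeq {Γ : Type*} [Group Γ] : Subgroup Γ → List Γ → Prop
  | _, [] => True
  | A, x :: xs => Admissible A x ∧ AdmissibleSeq (A ⊔ Subgroup.closure {x}) xs

/-- `clo A` is the set of all `x ∈ Γ` which occur as the last term of an `A`-admissible
sequence. -/
def clo {Γ : Type*} [Group Γ] (A : Subgroup Γ) : Set Γ :=
  { x | ∃ l : List Γ, AdmissibleSeq A (l ++ [x]) }

/-- The homomorphism `ι_{A,x}` from the free product `A ∗ ⟨t⟩` to `Γ` restricting to the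
inclusion on `A` and sending `t` to `x`. -/
noncomputable def iotaAX {Γ : Type*} [Group Γ] (A : Subgroup Γ) (x : Γ) :
    Monoid.Coprod (↥A) (Multiplicative ℤ) →* Γ :=
  Monoid.Coprod.lift A.subtype (zpowersHom Γ x)

/-- Elements `g 0, …, g (m-1)` of `Γ` are independent if they freely generate a free subgroup,
i.e. the induced homomorphism from the free group on `m` generators is injective. -/
def Independent {Γ : Type*} [Group Γ] {m : ℕ} (g : Fin m → Γ) : Prop :=
  Function.Injective (FreeGroup.lift g : FreeGroup (Fin m) →* Γ)

open Subgroup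

namespace NscAux

variable {α : Type*}

/-- Decompose a list around two adjacent entries. -/
lemma exists_decomp : ∀ (L : List α) (i : ℕ) (u v : α), L[i]? = some u → L[i+1]? = some v →
    ∃ l₁ l₂, L = l₁ ++ u :: v :: l₂ := by
  intro L
  induction L with
  | nil => intro i u v h; simp at h
  | cons w t ih =>
    intro i u v h1 h2
    cases i with
    | zero =>
      simp at h1; subst h1
      cases t with
      | nil => simp at h2
      | cons v' t' =>
        simp at h2; subst h2
        exact ⟨[], t', rfl⟩
    | succ j =>
      simp only [List.getElem?_cons_succ] at h1 h2
      obtain ⟨l₁, l₂, rfl⟩ := ih j u v h1 h2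
      exact ⟨w :: l₁, l₂, rfl⟩

variable [DecidableEq α]

def NoCancel (L : List (α × Bool)) : Prop :=
  ∀ (i : ℕ) (x : α) (b : Bool), L[i]? = some (x, b) → L[i+1]? = some (x, !b) → False

lemma noCancel_of_reduce {L : List (α × Bool)} (h : FreeGroup.reduce L = L) : NoCancel L := by
  intro i x b h1 h2
  obtain ⟨l₁, l₂, hL⟩ := exists_decomp L i (x, b) (x, !b) h1 h2
  exact FreeGroup.reduce.not (L₂ := l₁) (L₃ := l₂) (by rw [h, hL])

lemma reduce_eq_self_of_noCancel : ∀ {L : List (α × Bool)}, NoCancel L → FreeGroup.reduce L = L := by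
  intro L
  induction L with
  | nil => intro _; rfl
  | cons u t ih =>
    intro h
    have ht : NoCancel t := fun i x b h1 h2 => h (i+1) x b (by simpa) (by simpa)
    rw [FreeGroup.reduce.cons, ih ht]
    cases t with
    | nil => rfl
    | cons v t' =>
      obtain ⟨x, b⟩ := u
      obtain ⟨y, c⟩ := v
      simp only []
      rw [if_neg (by rintro ⟨rfl, rfl⟩; exact h 0 x (!c) (by simp) (by simp))]

lemma noCancel_toWord (w : FreeGroup α) : NoCancel w.toWord :=
  noCancel_of_reduce (FreeGroup.reduce_toWord w)


lemma letters_mem_of_mem_closure {s : Set α} {g : FreeGroup α}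
    (hg : g ∈ closure (FreeGroup.of '' s)) : ∀ p ∈ g.toWord, p.1 ∈ s := by
  refine closure_induction ?_ ?_ ?_ ?_ hg
  · rintro _ ⟨a, ha, rfl⟩ p hp
    rw [FreeGroup.toWord_of] at hp
    simp at hp
    rw [hp]; exact ha
  · intro p hp; rw [FreeGroup.toWord_one] at hp; simp at hp
  · intro u v _ _ hu hv p hp
    have := (FreeGroup.toWord_mul_sublist u v).mem hp
    rcases List.mem_append.1 this with h | h
    · exact hu p h
    · exact hv p h
  · intro u _ hu p hp
    rw [FreeGroup.toWord_inv] at hp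
    unfold FreeGroup.invRev at hp
    rw [List.mem_reverse, List.mem_map] at hp
    obtain ⟨q, hq, rfl⟩ := hp
    exact hu q hq

lemma mk_mem_closure_of_letters {s : Set α} :
    ∀ {L : List (α × Bool)}, (∀ p ∈ L, p.1 ∈ s) → FreeGroup.mk L ∈ closure (FreeGroup.of '' s) := by
  intro L
  induction L with
  | nil =>
    intro _
    have : FreeGroup.mk ([] : List (α × Bool)) = 1 := rfl
    rw [this]; exact one_mem _
  | cons u t ih =>
    intro h
    have h1 : FreeGroup.mk (u :: t) = FreeGroup.mk [u] * FreeGroup.mk t := by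
      rw [FreeGroup.mul_mk]; rfl
    rw [h1]
    refine mul_mem ?_ (ih fun p hp => h p (List.mem_cons_of_mem _ hp))
    have hu : u.1 ∈ s := h u List.mem_cons_self
    have hof : FreeGroup.of u.1 ∈ closure (FreeGroup.of '' s) :=
      subset_closure ⟨u.1, hu, rfl⟩
    obtain ⟨x, b⟩ := u
    cases b
    · have : FreeGroup.mk [(x, false)] = (FreeGroup.of x)⁻¹ := by
        rw [show FreeGroup.of x = FreeGroup.mk [(x, true)] from rfl, FreeGroup.inv_mk]; rfl
      rw [this]; exact inv_mem hof
    · exact hof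

/-- Conjugating a nontrivial element of the free factor avoiding `a` by `of a`
leaves that free factor. -/
lemma factP (a : α) {β : FreeGroup α}
    (hβ : β ∈ closure (FreeGroup.of '' {i | i ≠ a})) (hβ1 : β ≠ 1) :
    FreeGroup.of a * β * (FreeGroup.of a)⁻¹ ∉ closure (FreeGroup.of '' {i | i ≠ a}) := by
  intro hmem
  obtain ⟨M, hMdef⟩ : ∃ M, β.toWord = M := ⟨_, rfl⟩
  have hlet : ∀ p ∈ M, p.1 ≠ a := hMdef ▸ letters_mem_of_mem_closure hβ
  have hM : M ≠ [] := fun h => hβ1 (FreeGroup.toWord_eq_nil_iff.1 (hMdef.trans h))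
  have hMpos : 0 < M.length := List.length_pos_iff.2 hM
  have hMred : NoCancel M := hMdef ▸ noCancel_toWord β
  have hXeq : FreeGroup.of a * β * (FreeGroup.of a)⁻¹
      = FreeGroup.mk ((a, true) :: (M ++ [(a, false)])) := by
    have h1 : FreeGroup.of a = FreeGroup.mk [(a, true)] := rfl
    have h2 : (FreeGroup.of a)⁻¹ = FreeGroup.mk [(a, false)] := by
      rw [h1, FreeGroup.inv_mk]; rfl
    rw [h2, h1, ← FreeGroup.mk_toWord (x := β), hMdef, FreeGroup.mul_mk, FreeGroup.mul_mk]
    rfl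
  -- the word is reduced
  have hXred : NoCancel ((a, true) :: (M ++ [(a, false)])) := by
    intro i x b h1 h2
    rcases Nat.eq_zero_or_pos i with rfl | hi
    · -- second letter is head of M, whose letter is ≠ a; but it must equal a
      simp only [List.getElem?_cons_zero, Option.some_inj] at h1
      have hxa : x = a := by
        rw [Prod.ext_iff] at h1; exact h1.1.symm
      have h2' : (M ++ [(a, false)])[0]? = some (x, !b) := by simpa using h2
      rw [List.getElem?_append_left hMpos] at h2'
      exact hlet _ (List.mem_of_getElem? h2') (by rw [hxa])
    · obtain ⟨j, rfl⟩ := Nat.exists_eq_add_of_lt hi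
      simp only [Nat.zero_add, List.getElem?_cons_succ] at h1 h2
      by_cases hj1 : j + 1 < M.length
      · have hj : j < M.length := Nat.lt_of_succ_lt hj1
        rw [List.getElem?_append_left hj] at h1
        rw [List.getElem?_append_left hj1] at h2
        exact hMred j x b h1 h2
      · by_cases hj : j < M.length
        · rw [List.getElem?_append_left hj] at h1
          rw [List.getElem?_append_right (by omega)] at h2
          have hj1' : j + 1 - M.length = 0 := by omega
          rw [hj1'] at h2
          simp only [List.getElem?_cons_zero, Option.some_inj] at h2
          have hxa : x = a := by
            rw [Prod.ext_iff] at h2; exact h2.1.symm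
          exact hlet (x, b) (List.mem_of_getElem? h1) (by rw [hxa])
        · rw [List.getElem?_append_right (by omega)] at h1
          have h1' := List.getElem?_eq_some_iff.1 h1
          obtain ⟨hlt, -⟩ := h1'
          simp only [List.length_cons, List.length_nil] at hlt
          have hj' : j = M.length := by omega
          subst hj'
          rw [List.getElem?_append_right (by omega)] at h2
          have h2' := List.getElem?_eq_some_iff.1 h2
          obtain ⟨hlt2, -⟩ := h2'
          simp only [List.length_cons, List.length_nil] at hlt2
          omega
  have hw : (FreeGroup.mk ((a, true) :: (M ++ [(a, false)]))).toWord
      = (a, true) :: (M ++ [(a, false)]) := by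
    rw [FreeGroup.toWord_mk, reduce_eq_self_of_noCancel hXred]
  have hbad := letters_mem_of_mem_closure (hXeq ▸ hmem) (a, true)
    (by rw [hw]; exact List.mem_cons_self)
  exact hbad rfl

section Perm

variable (L : List (α × Bool))

/-- domain predicate for the partial shift associated to letter `a` -/
def pP (a : α) (k : Fin (L.length + 1)) : Prop :=
  L[(k : ℕ)]? = some (a, false) ∨ ((k : ℕ) ≠ 0 ∧ L[(k : ℕ) - 1]? = some (a, true))

/-- target predicate -/
def qP (a : α) (k : Fin (L.length + 1)) : Prop :=
  L[(k : ℕ)]? = some (a, true) ∨ ((k : ℕ) ≠ 0 ∧ L[(k : ℕ) - 1]? = some (a, false))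

instance (a : α) : DecidablePred (pP L a) := fun k => by unfold pP; infer_instance
instance (a : α) : DecidablePred (qP L a) := fun k => by unfold qP; infer_instance

variable {L}

private lemma lt_of_getElem? {i : ℕ} {u : α × Bool} (h : L[i]? = some u) : i < L.length :=
  (List.getElem?_eq_some_iff.1 h).1

/-- forward map of the partial bijection -/
def sigmaToFun (L : List (α × Bool)) (a : α) (k : { k : Fin (L.length + 1) // pP L a k }) :
    { k : Fin (L.length + 1) // qP L a k } :=
  if h : L[(k.1 : ℕ)]? = some (a, false) then
    ⟨⟨(k.1 : ℕ) + 1, by have := lt_of_getElem? h; omega⟩,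
      Or.inr ⟨Nat.succ_ne_zero _, by simpa using h⟩⟩
  else
    ⟨⟨(k.1 : ℕ) - 1, by have := k.1.isLt; omega⟩,
      Or.inl (k.2.resolve_left h).2⟩

/-- backward map of the partial bijection -/
def sigmaInvFun (L : List (α × Bool)) (a : α) (k : { k : Fin (L.length + 1) // qP L a k }) :
    { k : Fin (L.length + 1) // pP L a k } :=
  if h : L[(k.1 : ℕ)]? = some (a, true) then
    ⟨⟨(k.1 : ℕ) + 1, by have := lt_of_getElem? h; omega⟩,
      Or.inr ⟨Nat.succ_ne_zero _, by simpa using h⟩⟩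
  else
    ⟨⟨(k.1 : ℕ) - 1, by have := k.1.isLt; omega⟩,
      Or.inl (k.2.resolve_left h).2⟩

/-- The partial bijection: `k ↦ k+1` when the letter at `k` is `(a, false)`,
and `k ↦ k-1` when the letter at `k-1` is `(a, true)`. -/
def sigmaEquiv (hL : NoCancel L) (a : α) :
    { k : Fin (L.length + 1) // pP L a k } ≃ { k : Fin (L.length + 1) // qP L a k } where
  toFun := sigmaToFun L a
  invFun := sigmaInvFun L a
  left_inv := by
    rintro ⟨k, hk⟩
    by_cases h : L[(k : ℕ)]? = some (a, false)
    · rw [sigmaToFun, dif_pos h]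
      have hnot : ¬ L[((k : ℕ) + 1)]? = some (a, true) :=
        fun hcon => hL _ a false h (by simpa using hcon)
      rw [sigmaInvFun, dif_neg (by simpa using hnot)]
      simp
    · rw [sigmaToFun, dif_neg h]
      obtain ⟨hk0, hkm⟩ := hk.resolve_left h
      rw [sigmaInvFun, dif_pos (by simpa using hkm)]
      apply Subtype.ext; apply Fin.ext
      simp only []
      omega
  right_inv := by
    rintro ⟨k, hk⟩
    by_cases h : L[(k : ℕ)]? = some (a, true)
    · rw [sigmaInvFun, dif_pos h]
      have hnot : ¬ L[((k : ℕ) + 1)]? = some (a, false) :=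
        fun hcon => hL _ a true h (by simpa using hcon)
      rw [sigmaToFun, dif_neg (by simpa using hnot)]
      simp
    · rw [sigmaInvFun, dif_neg h]
      obtain ⟨hk0, hkm⟩ := hk.resolve_left h
      rw [sigmaToFun, dif_pos (by simpa using hkm)]
      apply Subtype.ext; apply Fin.ext
      simp only []
      omega

/-- The permutation of `Fin (L.length + 1)` associated to the letter `a`. -/
noncomputable def sigma (hL : NoCancel L) (a : α) : Equiv.Perm (Fin (L.length + 1)) :=
  (sigmaEquiv hL a).extendSubtype

lemma sigma_evalF (hL : NoCancel L) {a : α} {j : ℕ} (h : L[j]? = some (a, false)) :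
    sigma hL a ⟨j, by have := lt_of_getElem? h; omega⟩
      = ⟨j + 1, by have := lt_of_getElem? h; omega⟩ := by
  have hp : pP L a ⟨j, by have := lt_of_getElem? h; omega⟩ := Or.inl (by simpa using h)
  rw [sigma, Equiv.extendSubtype_apply_of_mem _ _ hp]
  show (sigmaToFun L a ⟨_, hp⟩ : Fin (L.length+1)) = _
  rw [sigmaToFun, dif_pos (by simpa using h)]

lemma sigma_evalT (hL : NoCancel L) {a : α} {j : ℕ} (h : L[j]? = some (a, true)) :
    sigma hL a ⟨j + 1, by have := lt_of_getElem? h; omega⟩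
      = ⟨j, by have := lt_of_getElem? h; omega⟩ := by
  have hp : pP L a ⟨j + 1, by have := lt_of_getElem? h; omega⟩ :=
    Or.inr ⟨Nat.succ_ne_zero _, by simpa using h⟩
  rw [sigma, Equiv.extendSubtype_apply_of_mem _ _ hp]
  show (sigmaToFun L a ⟨_, hp⟩ : Fin (L.length+1)) = _
  have hnot : ¬ L[(j + 1 : ℕ)]? = some (a, false) := fun hcon => hL j a true h (by simpa using hcon)
  rw [sigmaToFun, dif_neg (by simpa using hnot)]
  simp

lemma eval_take (hL : NoCancel L) :
    ∀ j (hj : j ≤ L.length),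
      ((FreeGroup.lift (sigma hL)) (FreeGroup.mk (L.take j)))⁻¹ ⟨0, Nat.succ_pos _⟩
        = ⟨j, by omega⟩ := by
  intro j
  induction j with
  | zero =>
    intro _
    simp only [List.take_zero]
    have h1 : FreeGroup.mk ([] : List (α × Bool)) = 1 := rfl
    rw [h1, map_one, inv_one, Equiv.Perm.one_apply]
  | succ j ih =>
    intro hj
    have hjl : j < L.length := hj
    have hu : L[j]? = some L[j] := List.getElem?_eq_getElem hjl
    obtain ⟨⟨x, b⟩, hu⟩ : ∃ u, L[j]? = some u := ⟨_, hu⟩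
    have hsplit : FreeGroup.mk (L.take (j+1)) = FreeGroup.mk (L.take j) * FreeGroup.mk [(x, b)] := by
      rw [FreeGroup.mul_mk, List.take_succ, hu]; rfl
    rw [hsplit, map_mul, mul_inv_rev, Equiv.Perm.mul_apply, ih (le_of_lt hjl)]
    cases b
    · -- letter (x, false): contributes (sigma x)⁻¹, whose inverse is sigma x
      have h1 : FreeGroup.mk [(x, false)] = (FreeGroup.of x)⁻¹ := by
        rw [show FreeGroup.of x = FreeGroup.mk [(x, true)] from rfl, FreeGroup.inv_mk]; rfl
      rw [h1, map_inv, inv_inv, FreeGroup.lift_apply_of]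
      exact sigma_evalF hL hu
    · -- letter (x, true): contributes sigma x, inverse sends j to j+1
      have h1 : FreeGroup.mk [(x, true)] = FreeGroup.of x := rfl
      rw [h1, FreeGroup.lift_apply_of]
      rw [Equiv.Perm.inv_eq_iff_eq]
      exact (sigma_evalT hL hu).symm

/-- Residual finiteness of free groups: a nontrivial element survives in a finite
permutation group. -/
theorem exists_perm_hom (w : FreeGroup α) (hw : w ≠ 1) :
    ∃ (n : ℕ) (π : FreeGroup α →* Equiv.Perm (Fin (n + 1))), π w ≠ 1 := by
  have hL : NoCancel w.toWord := noCancel_toWord w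
  refine ⟨w.toWord.length, FreeGroup.lift (sigma hL), fun hcon => ?_⟩
  have hlen : w.toWord.length ≠ 0 := by
    intro h0
    exact hw (FreeGroup.toWord_eq_nil_iff.1 (List.length_eq_zero_iff.1 h0))
  have := eval_take hL w.toWord.length le_rfl
  rw [List.take_length, FreeGroup.mk_toWord, hcon, inv_one, Equiv.Perm.one_apply] at this
  rw [Fin.mk.injEq] at this
  exact hlen this.symm

end Perm
/-- Free groups of finite rank are Hopfian: a surjection from a free group of the
same finite rank is injective. -/
theorem freeGroup_hopf {m : ℕ} {ι : Type*} [Finite ι] (hcard : Nat.card ι = m)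
    (ψ : FreeGroup (Fin m) →* FreeGroup ι) (hsurj : Function.Surjective ψ) :
    Function.Injective ψ := by
  rw [← MonoidHom.ker_eq_bot_iff]
  by_contra hker
  obtain ⟨w, hwker, hw1⟩ : ∃ w ∈ ψ.ker, w ≠ 1 := by
    by_contra hc
    push_neg at hc
    exact hker ((Subgroup.eq_bot_iff_forall _).2 hc)
  obtain ⟨n, π, hπ⟩ := exists_perm_hom w hw1
  set Q := Equiv.Perm (Fin (n + 1))
  letI : Fintype ι := Fintype.ofFinite ι
  -- the precomposition map on finite hom-sets
  have hinj : Function.Injective (fun ρ : FreeGroup ι →* Q => ρ.comp ψ) := by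
    intro ρ ρ' h
    exact (MonoidHom.cancel_right hsurj).1 h
  have hcard2 : Nat.card (FreeGroup ι →* Q) = Nat.card (FreeGroup (Fin m) →* Q) := by
    rw [Nat.card_congr (FreeGroup.lift (α := ι) (β := Q)).symm,
      Nat.card_congr (FreeGroup.lift (α := Fin m) (β := Q)).symm,
      Nat.card_fun, Nat.card_fun, hcard, Nat.card_eq_fintype_card (α := Fin m),
      Fintype.card_fin]
  haveI : Finite (FreeGroup ι →* Q) := Finite.of_equiv _ (FreeGroup.lift (α := ι) (β := Q))
  haveI : Finite (FreeGroup (Fin m) →* Q) :=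
    Finite.of_equiv _ (FreeGroup.lift (α := Fin m) (β := Q))
  have hbij : Function.Bijective (fun ρ : FreeGroup ι →* Q => ρ.comp ψ) :=
    (Nat.bijective_iff_injective_and_card _).2 ⟨hinj, hcard2⟩
  obtain ⟨ρ, hρ⟩ := hbij.2 π
  apply hπ
  have : π w = (ρ.comp ψ) w := by
    simp only at hρ
    rw [hρ]
  rw [this, MonoidHom.comp_apply, hwker, map_one]

lemma add_closure_eq_top_of_mul {G : Type*} [CommGroup G] {s : Set G}
    (h : Subgroup.closure s = ⊤) :
    AddSubgroup.closure (Additive.ofMul '' s) = ⊤ := by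
  rw [eq_top_iff]
  rintro x -
  have hx : x.toMul ∈ Subgroup.closure s := by rw [h]; trivial
  refine closure_induction
    (p := fun g _ => Additive.ofMul g ∈ AddSubgroup.closure (Additive.ofMul '' s))
    ?_ ?_ ?_ ?_ hx
  · intro g hg; exact AddSubgroup.subset_closure ⟨g, hg, rfl⟩
  · exact AddSubgroup.zero_mem _
  · intro g g' _ _ hg hg'; exact AddSubgroup.add_mem _ hg hg'
  · intro g _ hg; exact AddSubgroup.neg_mem _ hg

/-- A free group generated by a finite set has finitely many basis elements,
at most the size of the generating set. -/
theorem freeGroup_card_generators_le {ι : Type*} (S : Finset (FreeGroup ι))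
    (hS : closure (S : Set (FreeGroup ι)) = ⊤) :
    Finite ι ∧ Nat.card ι ≤ S.card := by
  classical
  set f : FreeGroup ι →* Abelianization (FreeGroup ι) := Abelianization.of
  have hsur : Function.Surjective f := fun x => QuotientGroup.mk'_surjective _ x
  have h1 : Subgroup.closure (f '' (S : Set (FreeGroup ι))) = ⊤ := by
    rw [← MonoidHom.map_closure, hS, Subgroup.map_top_of_surjective f hsur]
  -- pass to the free abelian group
  have h2 : AddSubgroup.closure (Additive.ofMul '' (f '' (S : Set (FreeGroup ι))))
      = (⊤ : AddSubgroup (FreeAbelianGroup ι)) := add_closure_eq_top_of_mul h1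
  set s' : Set (FreeAbelianGroup ι) := Additive.ofMul '' (f '' (S : Set (FreeGroup ι))) with hs'
  have hspan : Submodule.span ℤ s' = ⊤ := by
    rw [eq_top_iff]
    rintro x -
    have hx : x ∈ AddSubgroup.closure s' := (SetLike.ext_iff.1 h2 x).2 trivial
    refine AddSubgroup.closure_induction
      (p := fun g _ => g ∈ Submodule.span ℤ s')
      ?_ ?_ ?_ ?_ hx
    · intro g hg; exact Submodule.subset_span hg
    · exact Submodule.zero_mem _
    · intro g g' _ _ hg hg'; exact Submodule.add_mem _ hg hg'
    · intro g _ hg; exact Submodule.neg_mem _ hg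
  have hb := (FreeAbelianGroup.basis ι).le_span (J := s') hspan
  rw [Cardinal.mk_range_eq _ (FreeAbelianGroup.basis ι).injective] at hb
  have hs'card : Cardinal.mk s' ≤ (S.card : Cardinal) := by
    calc Cardinal.mk s' ≤ Cardinal.mk (f '' (S : Set (FreeGroup ι))) := Cardinal.mk_image_le
    _ ≤ Cardinal.mk (S : Set (FreeGroup ι)) := Cardinal.mk_image_le
    _ = S.card := Cardinal.mk_coe_finset
  have hfin : Cardinal.mk ι < Cardinal.aleph0 :=
    lt_of_le_of_lt (hb.trans hs'card) (Cardinal.nat_lt_aleph0 _)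
  have hF : Finite ι := Cardinal.lt_aleph0_iff_finite.1 hfin
  refine ⟨hF, ?_⟩
  have := Cardinal.toNat_le_toNat (hb.trans hs'card) (Cardinal.nat_lt_aleph0 _)
  rw [Cardinal.toNat_natCast] at this
  have hnc : Nat.card ι = Cardinal.toNat (Cardinal.mk ι) := rfl
  rw [hnc]
  exact this

variable {Γ : Type*} [Group Γ]

lemma closure_image_subtype_of_top {K : Subgroup Γ} {V : Set ↥K}
    (h : closure V = ⊤) : closure (Subtype.val '' V) = K := by
  have h1 : Subgroup.map K.subtype (closure V) = closure (K.subtype '' V) :=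
    MonoidHom.map_closure _ _
  rw [h, ← MonoidHom.range_eq_map, Subgroup.subtype_range] at h1
  show closure (⇑K.subtype '' V) = K
  rw [← h1]

lemma closure_eq_top_of_image_subtype {K : Subgroup Γ} {V : Set ↥K}
    (h : closure (Subtype.val '' V) = K) : closure V = ⊤ := by
  apply Subgroup.map_injective (Subgroup.subtype_injective K)
  rw [MonoidHom.map_closure, ← MonoidHom.range_eq_map, Subgroup.subtype_range]
  exact h

lemma exists_finset_subtype {K : Subgroup Γ} {V : Finset Γ} (hVK : ∀ v ∈ V, v ∈ K) :
    ∃ W : Finset ↥K, (Subtype.val '' (W : Set ↥K) = V) ∧ W.card = V.card := by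
  classical
  refine ⟨V.subtype (· ∈ K), ?_, ?_⟩
  · have h1 := Finset.subtype_map (· ∈ K) (s := V)
    have h2 : V.filter (· ∈ K) = V := Finset.filter_true_of_mem hVK
    rw [h2] at h1
    calc Subtype.val '' ((V.subtype (· ∈ K) : Finset ↥K) : Set ↥K)
        = ((V.subtype (· ∈ K)).map (Function.Embedding.subtype (· ∈ K)) : Finset Γ) := by
          rw [Finset.coe_map]; rfl
      _ = (V : Set Γ) := by rw [h1]
  · rw [Finset.card_subtype, Finset.filter_true_of_mem hVK]

lemma isFreeGroup_closure_range (G : Type*) [Group G] [IsFreeGroup G] :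
    closure (Set.range (IsFreeGroup.of : IsFreeGroup.Generators G → G)) = ⊤ := by
  have h : Set.range (IsFreeGroup.of : IsFreeGroup.Generators G → G)
      = (IsFreeGroup.mulEquiv G).toMonoidHom '' (Set.range FreeGroup.of) := by
    rw [← Set.range_comp]; rfl
  rw [h, ← MonoidHom.map_closure, FreeGroup.closure_range_of]
  exact Subgroup.map_top_of_surjective _ (IsFreeGroup.mulEquiv G).surjective

lemma gen_bound (G : Type*) [Group G] [IsFreeGroup G] (S : Finset G)
    (hS : closure (S : Set G) = ⊤) :
    Finite (IsFreeGroup.Generators G) ∧ Nat.card (IsFreeGroup.Generators G) ≤ S.card := by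
  classical
  set e := IsFreeGroup.toFreeGroup G
  have h1 : closure ((S.image e : Finset (FreeGroup (IsFreeGroup.Generators G))) :
      Set (FreeGroup (IsFreeGroup.Generators G))) = ⊤ := by
    rw [Finset.coe_image]
    have : (e : G → FreeGroup (IsFreeGroup.Generators G)) '' (S : Set G)
        = e.toMonoidHom '' (S : Set G) := rfl
    rw [this, ← MonoidHom.map_closure, hS]
    exact Subgroup.map_top_of_surjective _ e.surjective
  obtain ⟨hfin, hle⟩ := freeGroup_card_generators_le _ h1
  exact ⟨hfin, hle.trans (Finset.card_image_le)⟩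

/-- If a free subgroup `C'` of `Γ` is generated by `S₀ ∪ {x}` with `|S₀| ≤ r`, and conjugation
by `x` maps a nontrivial element of `⟨S₀⟩` into `⟨S₀⟩`, then `C'` is generated by at most `r`
elements. -/
theorem big_lemma (r : ℕ) (C' : Subgroup Γ) [hfree : IsFreeGroup ↥C'] (S₀ : Finset Γ) (x b : Γ)
    (hgen : closure ((S₀ : Set Γ) ∪ {x}) = C') (hcard : S₀.card ≤ r)
    (hb : b ∈ closure (S₀ : Set Γ)) (hb1 : b ≠ 1)
    (hconj : x * b * x⁻¹ ∈ closure (S₀ : Set Γ)) :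
    ∃ S₁ : Finset Γ, closure (S₁ : Set Γ) = C' ∧ S₁.card ≤ r := by
  classical
  -- the generators of C' as a finset
  have hxC : x ∈ C' := by
    rw [← hgen]; exact subset_closure (Or.inr rfl)
  have hS₀C : ∀ s ∈ S₀, s ∈ C' := by
    intro s hs
    rw [← hgen]; exact subset_closure (Or.inl hs)
  have hSxC : ∀ s ∈ insert x S₀, s ∈ C' := by
    intro s hs
    rcases Finset.mem_insert.1 hs with rfl | hs
    · exact hxC
    · exact hS₀C s hs
  have hgen' : closure ((insert x S₀ : Finset Γ) : Set Γ) = C' := by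
    rw [Finset.coe_insert, Set.insert_eq, Set.union_comm]
    exact hgen
  -- transfer generation to ↥C' and bound the number of generators
  obtain ⟨W, hWim, hWcard⟩ := exists_finset_subtype hSxC
  have hWtop : closure ((W : Set ↥C')) = ⊤ :=
    closure_eq_top_of_image_subtype (by rw [hWim]; exact hgen')
  obtain ⟨hfinι, hcardι⟩ := gen_bound ↥C' W hWtop
  have hcardι' : Nat.card (IsFreeGroup.Generators ↥C') ≤ r + 1 := by
    rw [hWcard] at hcardι
    exact hcardι.trans ((Finset.card_insert_le _ _).trans (by omega))
  -- main dichotomy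
  by_cases hm : Nat.card (IsFreeGroup.Generators ↥C') ≤ r
  · -- the basis itself gives few generators
    letI : Fintype (IsFreeGroup.Generators ↥C') := Fintype.ofFinite _
    refine ⟨Finset.univ.image (fun i : (IsFreeGroup.Generators ↥C') => ((IsFreeGroup.of i : ↥C') : Γ)), ?_, ?_⟩
    · have him : ((Finset.univ.image (fun i : (IsFreeGroup.Generators ↥C') => ((IsFreeGroup.of i : ↥C') : Γ)) : Finset Γ) : Set Γ)
          = Subtype.val '' (Set.range (IsFreeGroup.of : (IsFreeGroup.Generators ↥C') → ↥C')) := by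
        rw [Finset.coe_image, Finset.coe_univ, Set.image_univ, ← Set.range_comp]; rfl
      rw [him]
      exact closure_image_subtype_of_top (isFreeGroup_closure_range ↥C')
    · exact Finset.card_image_le.trans (by simpa using hm)
  · exfalso
    have hmeq : Nat.card (IsFreeGroup.Generators ↥C') = r + 1 := by omega
    -- if |S₀| < r, then C' would be generated by ≤ r elements, contradicting ¬(card (IsFreeGroup.Generators ↥C') ≤ r)
    have hS₀r : S₀.card = r := by
      rcases lt_or_eq_of_le hcard with hlt | heq
      · exfalso
        rw [hWcard] at hcardι
        have := Finset.card_insert_le x S₀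
        omega
      · exact heq
    have hxS₀ : x ∉ S₀ := by
      intro hx
      rw [hWcard, Finset.insert_eq_self.2 hx] at hcardι
      omega
    -- enumerate the generators
    have hcardins : (insert x S₀).card = r + 1 := by
      rw [Finset.card_insert_of_notMem hxS₀, hS₀r]
    let e : ↥S₀ ≃ Fin r := S₀.equivFin.trans (finCongr hS₀r)
    let g0 : Fin r → Γ := fun i => ((e.symm i : ↥S₀) : Γ)
    have hg0range : Set.range g0 = (S₀ : Set Γ) := by
      ext y
      constructor
      · rintro ⟨i, rfl⟩; exact (e.symm i).2
      · intro hy; exact ⟨e ⟨y, hy⟩, by simp [g0]⟩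
    let gg : Fin (r + 1) → Γ := Fin.snoc g0 x
    have hggrange : Set.range gg = (S₀ : Set Γ) ∪ {x} := by
      ext y
      constructor
      · rintro ⟨i, rfl⟩
        rcases eq_or_ne i (Fin.last r) with rfl | hi
        · right; simp [gg, Fin.snoc_last]
        · left
          obtain ⟨j, rfl⟩ := Fin.exists_castSucc_eq.2 hi
          rw [show gg j.castSucc = g0 j from Fin.snoc_castSucc _ _ _]
          rw [← hg0range]; exact ⟨j, rfl⟩
      · rintro (hy | rfl)
        · rw [← hg0range] at hy
          obtain ⟨j, rfl⟩ := hy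
          exact ⟨j.castSucc, Fin.snoc_castSucc _ _ _⟩
        · exact ⟨Fin.last r, Fin.snoc_last _ _⟩
    let φ : FreeGroup (Fin (r + 1)) →* Γ := FreeGroup.lift gg
    have hφrange : φ.range = C' := by
      rw [show φ.range = closure (Set.range gg) from FreeGroup.range_lift_eq_closure,
        hggrange, hgen]
    let ψ : FreeGroup (Fin (r + 1)) →* FreeGroup (IsFreeGroup.Generators ↥C') :=
      (IsFreeGroup.toFreeGroup ↥C').toMonoidHom.comp
        ((MulEquiv.subgroupCongr hφrange).toMonoidHom.comp φ.rangeRestrict)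
    have hψs : Function.Surjective ψ := by
      intro y
      obtain ⟨u, hu⟩ := (IsFreeGroup.toFreeGroup ↥C').surjective y
      obtain ⟨v, hv⟩ := (MulEquiv.subgroupCongr hφrange).surjective u
      obtain ⟨w, hw⟩ := φ.rangeRestrict_surjective v
      refine ⟨w, ?_⟩
      show (IsFreeGroup.toFreeGroup ↥C').toMonoidHom
        ((MulEquiv.subgroupCongr hφrange).toMonoidHom (φ.rangeRestrict w)) = y
      rw [hw]
      show (IsFreeGroup.toFreeGroup ↥C') ((MulEquiv.subgroupCongr hφrange) v) = y
      rw [hv, hu]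
    have hψinj : Function.Injective ψ := freeGroup_hopf hmeq ψ hψs
    have hφinj : Function.Injective φ := by
      intro u v huv
      apply hψinj
      show ((IsFreeGroup.toFreeGroup ↥C').toMonoidHom
        ((MulEquiv.subgroupCongr hφrange).toMonoidHom (φ.rangeRestrict u))) = _
      have : φ.rangeRestrict u = φ.rangeRestrict v := Subtype.ext huv
      rw [this]; rfl
    -- the free factor generated by the first r generators
    have hmapH : Subgroup.map φ
        (closure (FreeGroup.of '' {i : Fin (r + 1) | i ≠ Fin.last r}))
        = closure (S₀ : Set Γ) := by
      rw [MonoidHom.map_closure, Set.image_image]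
      congr 1
      have h1 : ∀ i : Fin (r + 1), φ (FreeGroup.of i) = gg i := fun i => FreeGroup.lift_apply_of
      ext y
      constructor
      · rintro ⟨i, hi, rfl⟩
        obtain ⟨j, rfl⟩ := Fin.exists_castSucc_eq.2 hi
        show φ (FreeGroup.of j.castSucc) ∈ (S₀ : Set Γ)
        rw [h1, show gg j.castSucc = g0 j from Fin.snoc_castSucc _ _ _]
        rw [← hg0range]; exact ⟨j, rfl⟩
      · intro hy
        rw [← hg0range] at hy
        obtain ⟨j, rfl⟩ := hy
        refine ⟨j.castSucc, ?_, ?_⟩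
        · exact Fin.exists_castSucc_eq.1 ⟨j, rfl⟩
        · show φ (FreeGroup.of j.castSucc) = g0 j
          rw [h1]; exact Fin.snoc_castSucc _ _ _
    obtain ⟨β, hβH, hφβ⟩ := Subgroup.mem_map.1 (hmapH ▸ hb)
    have hβ1 : β ≠ 1 := fun h0 => hb1 (by rw [← hφβ, h0, map_one])
    obtain ⟨β', hβ'H, hφβ'⟩ := Subgroup.mem_map.1 (hmapH ▸ hconj)
    have hkey : φ (FreeGroup.of (Fin.last r) * β * (FreeGroup.of (Fin.last r))⁻¹)
        = φ β' := by
      rw [map_mul, map_mul, map_inv, FreeGroup.lift_apply_of]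
      show gg (Fin.last r) * φ β * (gg (Fin.last r))⁻¹ = φ β'
      rw [show gg (Fin.last r) = x from Fin.snoc_last _ _, hφβ, hφβ']
    have := hφinj hkey
    exact factP (Fin.last r) hβH hβ1 (this ▸ hβ'H)


lemma subgroupRank_le {H : Subgroup Γ} (S : Finset Γ) (h : closure (S : Set Γ) = H) :
    subgroupRank H ≤ (S.card : ℕ∞) :=
  iInf₂_le S h

lemma exists_finset_rank {H : Subgroup Γ} {r : ℕ} (h : subgroupRank H ≤ (r : ℕ∞)) :
    ∃ S : Finset Γ, closure (S : Set Γ) = H ∧ S.card ≤ r := by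
  by_contra hc
  push_neg at hc
  have h2 : ((r + 1 : ℕ) : ℕ∞) ≤ subgroupRank H := by
    apply le_iInf₂
    intro S hS
    exact_mod_cast Nat.succ_le_of_lt (hc S hS)
  have h3 : ((r + 1 : ℕ) : ℕ∞) ≤ (r : ℕ∞) := h2.trans h
  rw [Nat.cast_le] at h3
  omega

lemma localRank_le {A : Subgroup Γ} {r : ℕ} (h : LocalRankLE A r) : localRank A ≤ (r : ℕ∞) :=
  iInf₂_le r h

lemma exists_localRank_eq {A : Subgroup Γ} (h : localRank A < ⊤) :
    ∃ r : ℕ, LocalRankLE A r ∧ (r : ℕ∞) = localRank A := by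
  classical
  have hex : ∃ r, LocalRankLE A r := by
    by_contra hc
    push_neg at hc
    have htop : localRank A = ⊤ := by
      rw [localRank]
      simp [hc]
    rw [htop] at h
    exact lt_irrefl _ h
  refine ⟨Nat.find hex, Nat.find_spec hex, le_antisymm ?_ (localRank_le (Nat.find_spec hex))⟩
  apply le_iInf₂
  intro r' h'
  exact_mod_cast Nat.find_min' hex h'

lemma kFree_mono {k j : ℕ} (h : KFree Γ k) (hj : j ≤ k) : KFree Γ j :=
  fun H hH => h H (le_trans hH (by exact_mod_cast hj))

lemma kFree_of_lt_iof {r : ℕ} (h : (r : ℕ∞) < iof Γ) : KFree Γ (r + 1) := by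
  rw [iof, lt_iSup_iff] at h
  obtain ⟨k, hk⟩ := h
  by_cases hK : KFree Γ k
  · have hrk : (r : ℕ∞) < (k : ℕ∞) := by
      rwa [ciSup_pos hK] at hk
    rw [Nat.cast_lt] at hrk
    exact kFree_mono hK hrk
  · simp [hK] at hk

lemma exists_finset_of_le_sup {A' : Subgroup Γ} {x : Γ} {D : Subgroup Γ}
    (hD : D ≤ A' ⊔ Subgroup.closure {x}) (hfg : D.FG) :
    ∃ T : Finset Γ, (T : Set Γ) ⊆ (A' : Set Γ) ∧ D ≤ Subgroup.closure ((T : Set Γ) ∪ {x}) := by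
  classical
  obtain ⟨S, hS⟩ := hfg
  have hsup : A' ⊔ Subgroup.closure {x} = Subgroup.closure ((A' : Set Γ) ∪ {x}) := by
    rw [Subgroup.closure_union, Subgroup.closure_eq]
  have key : ∀ g ∈ A' ⊔ Subgroup.closure {x}, ∃ T : Finset Γ,
      (T : Set Γ) ⊆ (A' : Set Γ) ∧ g ∈ Subgroup.closure ((T : Set Γ) ∪ {x}) := by
    intro g hg
    rw [hsup] at hg
    refine Subgroup.closure_induction
      (p := fun g _ => ∃ T : Finset Γ,
        (T : Set Γ) ⊆ (A' : Set Γ) ∧ g ∈ Subgroup.closure ((T : Set Γ) ∪ {x}))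
      ?_ ?_ ?_ ?_ hg
    · rintro y (hy | hy)
      · exact ⟨{y}, by simpa using hy, subset_closure (Or.inl (by simp))⟩
      · rw [Set.mem_singleton_iff] at hy
        subst hy
        exact ⟨∅, by simp, subset_closure (Or.inr rfl)⟩
    · exact ⟨∅, by simp, one_mem _⟩
    · rintro u v _ _ ⟨T₁, hT₁, hu⟩ ⟨T₂, hT₂, hv⟩
      refine ⟨T₁ ∪ T₂, ?_, mul_mem ?_ ?_⟩
      · rw [Finset.coe_union]
        exact Set.union_subset hT₁ hT₂
      · exact Subgroup.closure_mono (Set.union_subset_union_left _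
          (by rw [Finset.coe_union]; exact Set.subset_union_left)) hu
      · exact Subgroup.closure_mono (Set.union_subset_union_left _
          (by rw [Finset.coe_union]; exact Set.subset_union_right)) hv
    · rintro u _ ⟨T₁, hT₁, hu⟩
      exact ⟨T₁, hT₁, inv_mem hu⟩
  have key' : ∀ s : {s // s ∈ S}, ∃ T : Finset Γ,
      (T : Set Γ) ⊆ (A' : Set Γ) ∧ (s : Γ) ∈ Subgroup.closure ((T : Set Γ) ∪ {x}) :=
    fun s => key s (hD (hS ▸ subset_closure s.2))
  choose T hT1 hT2 using key'
  refine ⟨S.attach.biUnion T, ?_, ?_⟩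
  · intro y hy
    simp only [Finset.coe_biUnion, Set.mem_iUnion] at hy
    obtain ⟨s, _, hs⟩ := hy
    exact hT1 s hs
  · rw [← hS, Subgroup.closure_le]
    intro s hs
    refine Subgroup.closure_mono (Set.union_subset_union_left _ ?_) (hT2 ⟨s, hs⟩)
    intro y hy
    simp only [Finset.coe_biUnion, Set.mem_iUnion]
    exact ⟨⟨s, hs⟩, S.mem_attach _, hy⟩

/-- Core lemma: if `x` normalizes a nontrivial subgroup `B ≤ A'`, `A'` has local rank at
most `r`, and `Γ` is `(r+1)`-free, then `⟨A', x⟩` has local rank at most `r`. -/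
lemma main_lemma {A' B : Subgroup Γ} {x b : Γ} (r : ℕ)
    (hLR : LocalRankLE A' r) (hK : KFree Γ (r + 1)) (hBA : B ≤ A')
    (hx : x ∈ Subgroup.normalizer (B : Set Γ)) (hb : b ∈ B) (hb1 : b ≠ 1) :
    LocalRankLE (A' ⊔ Subgroup.closure {x}) r := by
  classical
  intro D hD hfg
  obtain ⟨T, hTA, hDT⟩ := exists_finset_of_le_sup hD hfg
  have hbA : b ∈ A' := hBA hb
  have hconjB : x * b * x⁻¹ ∈ B := (Subgroup.mem_normalizer_iff.1 hx b).1 hb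
  have hconjA : x * b * x⁻¹ ∈ A' := hBA hconjB
  set T' : Finset Γ := insert b (insert (x * b * x⁻¹) T) with hT'
  have hB₀A : Subgroup.closure (T' : Set Γ) ≤ A' := by
    rw [Subgroup.closure_le]
    intro y hy
    simp only [hT', Finset.coe_insert, Set.mem_insert_iff] at hy
    rcases hy with rfl | rfl | hy
    · exact hbA
    · exact hconjA
    · exact hTA hy
  obtain ⟨C, hCA, hB₀C, hCrank⟩ := hLR _ hB₀A ⟨T', rfl⟩
  obtain ⟨S₀, hS₀gen, hS₀card⟩ := exists_finset_rank hCrank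
  have hbC : b ∈ C := hB₀C (subset_closure (by simp [hT']))
  have hconjC : x * b * x⁻¹ ∈ C := hB₀C (subset_closure (by simp [hT']))
  have hC'gen : closure ((S₀ : Set Γ) ∪ {x}) = C ⊔ Subgroup.closure {x} := by
    rw [Subgroup.closure_union, hS₀gen]
  have hC'rank : subgroupRank (C ⊔ Subgroup.closure {x}) ≤ ((r + 1 : ℕ) : ℕ∞) := by
    have h1 : closure ((insert x S₀ : Finset Γ) : Set Γ) = C ⊔ Subgroup.closure {x} := by
      rw [Finset.coe_insert, Set.insert_eq, Set.union_comm]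
      exact hC'gen
    refine (subgroupRank_le _ h1).trans ?_
    have := Finset.card_insert_le x S₀
    exact_mod_cast le_trans this (by omega)
  haveI hfree : IsFreeGroup ↥(C ⊔ Subgroup.closure {x}) := hK _ hC'rank
  obtain ⟨S₁, hS₁gen, hS₁card⟩ := big_lemma r (C ⊔ Subgroup.closure {x}) S₀ x b hC'gen hS₀card
    (by rw [hS₀gen]; exact hbC) hb1 (by rw [hS₀gen]; exact hconjC)
  refine ⟨C ⊔ Subgroup.closure {x}, sup_le (le_trans hCA le_sup_left) le_sup_right, ?_, ?_⟩
  · refine le_trans hDT ?_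
    rw [Subgroup.closure_le]
    rintro y (hy | hy)
    · exact Subgroup.mem_sup_left (hB₀C (subset_closure (by simp [hT', hy])))
    · rw [Set.mem_singleton_iff] at hy
      subst hy
      exact Subgroup.mem_sup_right (subset_closure rfl)
  · refine (subgroupRank_le S₁ hS₁gen).trans ?_
    exact_mod_cast hS₁card


end NscAux

/-- If `A` is a closable subgroup of `Γ` and `B` is a nontrivial subgroup of `A`, then the
normalizer of `B` in `Γ` is contained in `clo A`. -/
theorem normalizer_subset_clo {Γ : Type*} [Group Γ] (A B : Subgroup Γ)
    (hA : Closable A) (hBA : B ≤ A) (hB : B ≠ ⊥) :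
    (Subgroup.normalizer (B : Set Γ) : Set Γ) ⊆ clo A := by
  obtain ⟨hfin, z, hz⟩ := hA
  obtain ⟨b, hbB, hb1⟩ : ∃ b ∈ B, b ≠ 1 := by
    by_contra hc
    push_neg at hc
    exact hB ((Subgroup.eq_bot_iff_forall _).2 hc)
  intro x hx
  rw [SetLike.mem_coe] at hx
  by_cases hcase : localRank (A ⊔ Subgroup.closure {z}) ≤ localRank A
  · -- use the sequence [z, x]
    have hz' : localRank (A ⊔ Subgroup.closure {z}) < ⊤ := lt_of_lt_of_le hz le_top
    obtain ⟨r₁, hLR₁, hr₁⟩ := NscAux.exists_localRank_eq hz'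
    have hKf : KFree Γ (r₁ + 1) := NscAux.kFree_of_lt_iof (by rw [hr₁]; exact hz)
    have hML := NscAux.main_lemma r₁ hLR₁ hKf (le_trans hBA le_sup_left) hx hbB hb1
    have hle : localRank ((A ⊔ Subgroup.closure {z}) ⊔ Subgroup.closure {x})
        ≤ localRank (A ⊔ Subgroup.closure {z}) := by
      rw [← hr₁]
      exact NscAux.localRank_le hML
    refine ⟨[z], ?_⟩
    show Admissible A z ∧ Admissible (A ⊔ Subgroup.closure {z}) x ∧ True
    refine ⟨⟨hz, hcase⟩, ⟨lt_of_le_of_lt hle hz, hle⟩, trivial⟩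
  · -- use the sequence [x]
    push_neg at hcase
    have hAiof : localRank A < iof Γ := lt_trans hcase hz
    obtain ⟨r, hLR, hr⟩ := NscAux.exists_localRank_eq hfin
    have hKf : KFree Γ (r + 1) := NscAux.kFree_of_lt_iof (by rw [hr]; exact hAiof)
    have hML := NscAux.main_lemma r hLR hKf hBA hx hbB hb1
    have hle : localRank (A ⊔ Subgroup.closure {x}) ≤ localRank A := by
      rw [← hr]
      exact NscAux.localRank_le hML
    refine ⟨[], ?_⟩
    show Admissible A x ∧ True
    exact ⟨⟨lt_of_le_of_lt hle hAiof, hle⟩, trivial⟩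
end

section
/- Suppose that for m = 1, 2 we are given positive real numbers a_{m,0} and a_{m,1} with a_{m,0} ≤ a_{m,1}. Let C be a positive real number, and suppose that (x₁, x₂) is a point of [a_{1,0}, a_{1,1}] × [a_{2,0}, a_{2,1}] such that (x₁, x₂, C) ∈ 𝔑. Then Ω(x₁, x₂, C) ≤ A(C, a_{1,0}, a_{1,1}, a_{2,0}, a_{2,1}). -/
open Real

/-- `ω(x,y,z) = (cosh x · cosh y − cosh z)/(sinh x · sinh y)`. -/
noncomputable def omegaFn (x y z : ℝ) : ℝ :=
  (Real.cosh x * Real.cosh y - Real.cosh z) / (Real.sinh x * Real.sinh y)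

/-- `𝔑`: the set of triples of positive reals satisfying the triangle inequalities. -/
def frakN (x y z : ℝ) : Prop :=
  0 < x ∧ 0 < y ∧ 0 < z ∧ z ≤ x + y ∧ y ≤ x + z ∧ x ≤ y + z

/-- `Ω(x,y,z) = arccos(ω(x,y,z))`, the angle function on `𝔑`. -/
noncomputable def OmegaFn (x y z : ℝ) : ℝ := Real.arccos (omegaFn x y z)

/-- `Ω̄(x,y,z) = arccos(min(max(ω(x,y,z), −1), 1))`, the clamped extension of `Ω`. -/
noncomputable def OmegaBar (x y z : ℝ) : ℝ :=
  Real.arccos (min (max (omegaFn x y z) (-1)) 1)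

/-- The inverse hyperbolic cosine. -/
noncomputable def arccoshFn (x : ℝ) : ℝ := Real.log (x + Real.sqrt (x ^ 2 - 1))

/-- `θ(C,x) = Ω̄(arccosh(cosh x / cosh C), x, C)` if `x > C`, and `π/2` otherwise. -/
noncomputable def thetaFn (C x : ℝ) : ℝ :=
  if C < x then OmegaBar (arccoshFn (Real.cosh x / Real.cosh C)) x C else π / 2

/-- `A₁(C, a_{1,0}, a_{1,1}, a_{2,0}, a_{2,1}) = max over corners of `Ω̄(a_{1,i}, a_{2,j}, C)`. -/
noncomputable def A1Fn (C a10 a11 a20 a21 : ℝ) : ℝ :=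
  max (max (OmegaBar a10 a20 C) (OmegaBar a10 a21 C))
      (max (OmegaBar a11 a20 C) (OmegaBar a11 a21 C))

/-- `A₂(C, a_{1,0}, a_{1,1}, a_{2,0}, a_{2,1}) = max over (m,i) of `θ(C, a_{m,i})`. -/
noncomputable def A2Fn (C a10 a11 a20 a21 : ℝ) : ℝ :=
  max (max (thetaFn C a10) (thetaFn C a11)) (max (thetaFn C a20) (thetaFn C a21))

/-- `A = max(A₁, A₂)`. -/
noncomputable def AFn (C a10 a11 a20 a21 : ℝ) : ℝ :=
  max (A1Fn C a10 a11 a20 a21) (A2Fn C a10 a11 a20 a21)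

lemma arccos_antitone : Antitone Real.arccos := by
  intro a b h
  unfold Real.arccos
  have := Real.monotone_arcsin h
  linarith

lemma exp_arccoshFn {t : ℝ} (ht : 1 ≤ t) :
    Real.exp (arccoshFn t) = t + Real.sqrt (t ^ 2 - 1) := by
  have h0 : 0 ≤ t ^ 2 - 1 := by nlinarith
  have hr : 0 < t + Real.sqrt (t ^ 2 - 1) := by positivity
  exact Real.exp_log hr

lemma exp_neg_arccoshFn {t : ℝ} (ht : 1 ≤ t) :
    Real.exp (-arccoshFn t) = t - Real.sqrt (t ^ 2 - 1) := by
  have h0 : 0 ≤ t ^ 2 - 1 := by nlinarith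
  have hs : Real.sqrt (t ^ 2 - 1) ^ 2 = t ^ 2 - 1 := Real.sq_sqrt h0
  have hm : (t + Real.sqrt (t ^ 2 - 1)) * (t - Real.sqrt (t ^ 2 - 1)) = 1 := by nlinarith
  rw [Real.exp_neg, exp_arccoshFn ht]
  exact inv_eq_of_mul_eq_one_right hm

lemma cosh_arccoshFn {t : ℝ} (ht : 1 ≤ t) : Real.cosh (arccoshFn t) = t := by
  rw [Real.cosh_eq, exp_arccoshFn ht, exp_neg_arccoshFn ht]; ring

lemma sinh_arccoshFn {t : ℝ} (ht : 1 ≤ t) :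
    Real.sinh (arccoshFn t) = Real.sqrt (t ^ 2 - 1) := by
  rw [Real.sinh_eq, exp_arccoshFn ht, exp_neg_arccoshFn ht]; ring

lemma omega_comm (x y z : ℝ) : omegaFn x y z = omegaFn y x z := by
  unfold omegaFn; rw [mul_comm (Real.cosh x), mul_comm (Real.sinh x)]

-- key lower bound

lemma omega_ge_sqrt {x y C : ℝ} (hx : 0 < x) (hy : 0 < y) (hC : 0 < C) (h : C ≤ y) :
    Real.sqrt (Real.sinh y ^ 2 - Real.sinh C ^ 2) / Real.sinh y ≤ omegaFn x y C := by
  have sx := Real.sinh_pos_iff.2 hx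
  have sy := Real.sinh_pos_iff.2 hy
  have sC := Real.sinh_pos_iff.2 hC
  have hsy : Real.sinh C ≤ Real.sinh y := Real.sinh_le_sinh.2 h
  have hcy : Real.cosh C ≤ Real.cosh y := Real.cosh_le_cosh.2 (by
    rw [abs_of_pos hC, abs_of_pos hy]; exact h)
  have hN : 0 ≤ Real.cosh x * Real.cosh y - Real.cosh C := by
    nlinarith [Real.one_le_cosh x, Real.cosh_pos (x := y)]
  have hx2 : Real.sinh x ^ 2 = Real.cosh x ^ 2 - 1 := Real.sinh_sq x
  have key : Real.sqrt (Real.sinh y ^ 2 - Real.sinh C ^ 2) * Real.sinh x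
      ≤ Real.cosh x * Real.cosh y - Real.cosh C := by
    have h1 : Real.sqrt (Real.sinh y ^ 2 - Real.sinh C ^ 2) * Real.sinh x
        = Real.sqrt ((Real.sinh y ^ 2 - Real.sinh C ^ 2) * Real.sinh x ^ 2) := by
      rw [Real.sqrt_mul (by nlinarith), Real.sqrt_sq sx.le]
    rw [h1]
    calc Real.sqrt ((Real.sinh y ^ 2 - Real.sinh C ^ 2) * Real.sinh x ^ 2)
        ≤ Real.sqrt ((Real.cosh x * Real.cosh y - Real.cosh C) ^ 2) := by
          apply Real.sqrt_le_sqrt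
          nlinarith [sq_nonneg (Real.cosh C * Real.cosh x - Real.cosh y),
            Real.sinh_sq y, Real.sinh_sq C]
      _ = Real.cosh x * Real.cosh y - Real.cosh C := Real.sqrt_sq hN
  unfold omegaFn
  rw [div_le_div_iff₀ sy (by positivity)]
  calc Real.sqrt (Real.sinh y ^ 2 - Real.sinh C ^ 2) * (Real.sinh x * Real.sinh y)
      = (Real.sqrt (Real.sinh y ^ 2 - Real.sinh C ^ 2) * Real.sinh x) * Real.sinh y := by ring
    _ ≤ (Real.cosh x * Real.cosh y - Real.cosh C) * Real.sinh y := by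
        exact mul_le_mul_of_nonneg_right key sy.le

lemma omega_mono {a b y C : ℝ} (ha : 0 < a) (hab : a ≤ b) (hy : 0 < y) (hyC : y ≤ C) :
    omegaFn a y C ≤ omegaFn b y C := by
  have sa := Real.sinh_pos_iff.2 ha
  have sb := Real.sinh_pos_iff.2 (ha.trans_le hab)
  have sy := Real.sinh_pos_iff.2 hy
  have hcy : Real.cosh y ≤ Real.cosh C := Real.cosh_le_cosh.2 (by
    rw [abs_of_pos hy, abs_of_pos (hy.trans_le hyC)]; exact hyC)
  set u := (b + a) / 2 with hu
  set v := (b - a) / 2 with hv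
  have hbv : b = u + v := by rw [hu, hv]; ring
  have hav : a = u - v := by rw [hu, hv]; ring
  have hv0 : 0 ≤ v := by rw [hv]; linarith
  have huv : v ≤ u := by rw [hu, hv]; linarith
  have hcuv : Real.cosh v ≤ Real.cosh u := Real.cosh_le_cosh.2 (by
    rw [abs_of_nonneg hv0, abs_of_nonneg (hv0.trans huv)]; exact huv)
  have sv : 0 ≤ Real.sinh v := Real.sinh_nonneg_iff.2 hv0
  have key : (Real.cosh a * Real.cosh y - Real.cosh C) * Real.sinh b
      ≤ (Real.cosh b * Real.cosh y - Real.cosh C) * Real.sinh a := by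
    rw [hbv, hav, Real.sinh_add, Real.sinh_sub, Real.cosh_add, Real.cosh_sub]
    have hid : Real.cosh u ^ 2 - Real.sinh u ^ 2 = 1 := Real.cosh_sq_sub_sinh_sq u
    have hdiff : ((Real.cosh u * Real.cosh v + Real.sinh u * Real.sinh v) * Real.cosh y - Real.cosh C) * (Real.sinh u * Real.cosh v - Real.cosh u * Real.sinh v)
        - ((Real.cosh u * Real.cosh v - Real.sinh u * Real.sinh v) * Real.cosh y - Real.cosh C) * (Real.sinh u * Real.cosh v + Real.cosh u * Real.sinh v)
        = 2 * (Real.sinh v * (Real.cosh u * Real.cosh C - Real.cosh y * Real.cosh v)) := by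
      linear_combination (-2 * Real.cosh y * Real.sinh v * Real.cosh v) * hid
    nlinarith [mul_nonneg sv (sub_nonneg.2 (mul_le_mul hcy hcuv (Real.cosh_pos (x := v)).le (Real.cosh_pos (x := C)).le))]
  unfold omegaFn
  rw [div_le_div_iff₀ (by positivity) (by positivity)]
  nlinarith [mul_le_mul_of_nonneg_right key sy.le]

lemma omega_ge_neg_one {x y z : ℝ} (h : frakN x y z) : -1 ≤ omegaFn x y z := by
  obtain ⟨hx, hy, hz, hzxy, -, -⟩ := h
  have sx := Real.sinh_pos_iff.2 hx
  have sy := Real.sinh_pos_iff.2 hy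
  have hcz : Real.cosh z ≤ Real.cosh (x + y) := Real.cosh_le_cosh.2 (by
    rw [abs_of_pos hz, abs_of_pos (by linarith : (0:ℝ) < x + y)]; exact hzxy)
  rw [Real.cosh_add] at hcz
  unfold omegaFn
  rw [le_div_iff₀ (by positivity)]
  linarith

lemma theta_eq {C a : ℝ} (hC : 0 < C) (h : C < a) :
    thetaFn C a = Real.arccos (Real.sqrt (Real.sinh a ^ 2 - Real.sinh C ^ 2) / Real.sinh a) := by
  have cC := Real.cosh_pos (x := C)
  have sa := Real.sinh_pos_iff.2 (hC.trans h)
  have hsCa : Real.sinh C < Real.sinh a := Real.sinh_lt_sinh.2 h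
  have sC := Real.sinh_pos_iff.2 hC
  have hs2 : (0:ℝ) ≤ Real.sinh a ^ 2 - Real.sinh C ^ 2 := by nlinarith
  set S := Real.sqrt (Real.sinh a ^ 2 - Real.sinh C ^ 2) with hS
  have hS2 : S ^ 2 = Real.sinh a ^ 2 - Real.sinh C ^ 2 := Real.sq_sqrt hs2
  have hSpos : 0 < S := Real.sqrt_pos.2 (by nlinarith)
  have hSle : S ≤ Real.sinh a := by
    rw [hS]
    calc Real.sqrt (Real.sinh a ^ 2 - Real.sinh C ^ 2) ≤ Real.sqrt (Real.sinh a ^ 2) :=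
          Real.sqrt_le_sqrt (by nlinarith)
      _ = Real.sinh a := Real.sqrt_sq sa.le
  have hca : Real.cosh C ≤ Real.cosh a := Real.cosh_le_cosh.2 (by
    rw [abs_of_pos hC, abs_of_pos (hC.trans h)]; exact h.le)
  set t := Real.cosh a / Real.cosh C with htdef
  have ht : 1 ≤ t := (one_le_div cC).2 hca
  have ht2 : t ^ 2 - 1 = (Real.sinh a ^ 2 - Real.sinh C ^ 2) / Real.cosh C ^ 2 := by
    rw [htdef]
    field_simp
    nlinarith [Real.sinh_sq a, Real.sinh_sq C]
  have hsinh : Real.sinh (arccoshFn t) = S / Real.cosh C := by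
    rw [sinh_arccoshFn ht, ht2, Real.sqrt_div hs2, Real.sqrt_sq cC.le]
  have hcosh : Real.cosh (arccoshFn t) = t := cosh_arccoshFn ht
  have homega : omegaFn (arccoshFn t) a C = S / Real.sinh a := by
    unfold omegaFn
    rw [hcosh, hsinh, htdef]
    rw [div_eq_div_iff (by positivity) sa.ne']
    have : Real.cosh a / Real.cosh C * Real.cosh a - Real.cosh C
        = (Real.cosh a ^ 2 - Real.cosh C ^ 2) / Real.cosh C := by field_simp
    rw [this]
    have h2 : Real.cosh a ^ 2 - Real.cosh C ^ 2 = S ^ 2 := by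
      rw [hS2]; nlinarith [Real.sinh_sq a, Real.sinh_sq C]
    rw [h2]
    field_simp
  have hclamp : min (max (omegaFn (arccoshFn t) a C) (-1)) 1 = S / Real.sinh a := by
    rw [homega]
    have h1 : (0:ℝ) ≤ S / Real.sinh a := by positivity
    have h2 : S / Real.sinh a ≤ 1 := (div_le_one sa).2 hSle
    rw [max_eq_left (by linarith), min_eq_left h2]
  unfold thetaFn
  rw [if_pos h]
  unfold OmegaBar
  rw [hclamp]

lemma sqrt_ratio_mono {c p q : ℝ} (hp : 0 < p) (hpq : p ≤ q) (hc : 0 ≤ c) (hcp : c ≤ p ^ 2) :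
    Real.sqrt (p ^ 2 - c) / p ≤ Real.sqrt (q ^ 2 - c) / q := by
  have hq : 0 < q := hp.trans_le hpq
  rw [div_le_div_iff₀ hp hq]
  have h1 : Real.sqrt (p ^ 2 - c) * q = Real.sqrt ((p ^ 2 - c) * q ^ 2) := by
    rw [Real.sqrt_mul (by linarith), Real.sqrt_sq hq.le]
  have h2 : Real.sqrt (q ^ 2 - c) * p = Real.sqrt ((q ^ 2 - c) * p ^ 2) := by
    rw [Real.sqrt_mul (by nlinarith), Real.sqrt_sq hp.le]
  rw [h1, h2]
  apply Real.sqrt_le_sqrt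
  have hpq2 : p ^ 2 ≤ q ^ 2 := by nlinarith
  nlinarith [mul_nonneg hc (sub_nonneg.2 hpq2)]

lemma arccos_le_theta {C a y w : ℝ} (hC : 0 < C) (ha : 0 < a) (hay : a ≤ y) (hCy : C ≤ y)
    (hw : Real.sqrt (Real.sinh y ^ 2 - Real.sinh C ^ 2) / Real.sinh y ≤ w) :
    Real.arccos w ≤ thetaFn C a := by
  have sy := Real.sinh_pos_iff.2 (hC.trans_le hCy)
  have sC := Real.sinh_pos_iff.2 hC
  have hsCy : Real.sinh C ≤ Real.sinh y := Real.sinh_le_sinh.2 hCy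
  by_cases hca : C < a
  · rw [theta_eq hC hca]
    apply arccos_antitone
    refine le_trans ?_ hw
    have sa := Real.sinh_pos_iff.2 ha
    have hsay : Real.sinh a ≤ Real.sinh y := Real.sinh_le_sinh.2 hay
    exact sqrt_ratio_mono sa hsay (by positivity) (by nlinarith [Real.sinh_lt_sinh.2 hca])
  · unfold thetaFn
    rw [if_neg hca]
    apply Real.arccos_le_pi_div_two.2
    refine le_trans ?_ hw
    positivity

/-- If `(x₁, x₂)` lies in the rectangle `[a_{1,0}, a_{1,1}] × [a_{2,0}, a_{2,1}]` and
`(x₁, x₂, C) ∈ 𝔑`, then `Ω(x₁, x₂, C) ≤ A(C, a_{1,0}, a_{1,1}, a_{2,0}, a_{2,1})`. -/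
theorem Omega_le_A (a10 a11 a20 a21 C x₁ x₂ : ℝ)
    (ha10 : 0 < a10) (ha1 : a10 ≤ a11) (ha20 : 0 < a20) (ha2 : a20 ≤ a21)
    (hC : 0 < C)
    (hx₁ : x₁ ∈ Set.Icc a10 a11) (hx₂ : x₂ ∈ Set.Icc a20 a21)
    (hN : frakN x₁ x₂ C) :
    OmegaFn x₁ x₂ C ≤ AFn C a10 a11 a20 a21 := by
  obtain ⟨h1l, h1r⟩ := hx₁
  obtain ⟨h2l, h2r⟩ := hx₂
  have hx1 : 0 < x₁ := ha10.trans_le h1l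
  have hx2 : 0 < x₂ := ha20.trans_le h2l
  rcases le_or_gt C x₂ with h2 | h2
  · -- bound by θ(C, a20)
    have hw := omega_ge_sqrt hx1 hx2 hC h2
    have := arccos_le_theta hC ha20 h2l h2 hw
    calc OmegaFn x₁ x₂ C ≤ thetaFn C a20 := this
      _ ≤ A2Fn C a10 a11 a20 a21 :=
        le_trans (le_max_left _ _) (le_max_right _ _)
      _ ≤ AFn C a10 a11 a20 a21 := le_max_right _ _
  rcases le_or_gt C x₁ with h1 | h1
  · have hw : Real.sqrt (Real.sinh x₁ ^ 2 - Real.sinh C ^ 2) / Real.sinh x₁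
        ≤ omegaFn x₁ x₂ C := by
      rw [omega_comm]; exact omega_ge_sqrt hx2 hx1 hC h1
    have := arccos_le_theta hC ha10 h1l h1 hw
    calc OmegaFn x₁ x₂ C ≤ thetaFn C a10 := this
      _ ≤ A2Fn C a10 a11 a20 a21 :=
        le_trans (le_max_left _ _) (le_max_left _ _)
      _ ≤ AFn C a10 a11 a20 a21 := le_max_right _ _
  · -- both x₁, x₂ < C: corner a10, a20
    have m1 : omegaFn a10 x₂ C ≤ omegaFn x₁ x₂ C := omega_mono ha10 h1l hx2 h2.le
    have m2 : omegaFn a20 a10 C ≤ omegaFn x₂ a10 C :=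
      omega_mono ha20 h2l ha10 (h1l.trans h1.le)
    have hcorner : omegaFn a10 a20 C ≤ omegaFn x₁ x₂ C := by
      rw [omega_comm a10 a20]
      calc omegaFn a20 a10 C ≤ omegaFn x₂ a10 C := m2
        _ = omegaFn a10 x₂ C := omega_comm _ _ _
        _ ≤ omegaFn x₁ x₂ C := m1
    have hneg := omega_ge_neg_one hN
    have hOB : OmegaFn x₁ x₂ C ≤ OmegaBar a10 a20 C := by
      unfold OmegaFn OmegaBar
      apply arccos_antitone
      calc min (max (omegaFn a10 a20 C) (-1)) 1 ≤ max (omegaFn a10 a20 C) (-1) :=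
            min_le_left _ _
        _ ≤ omegaFn x₁ x₂ C := max_le hcorner hneg
    calc OmegaFn x₁ x₂ C ≤ OmegaBar a10 a20 C := hOB
      _ ≤ A1Fn C a10 a11 a20 a21 := le_trans (le_max_left _ _) (le_max_left _ _)
      _ ≤ AFn C a10 a11 a20 a21 := le_max_left _ _
end

section
/- For every real number η ≥ 0, the function F defined on (0, ∞) by F(x) = cosh(f₁(x) + η)/cosh(x/2) is strictly monotone decreasing, where f₁(x) = log((eˣ + 3)/(eˣ − 1)) for x > 0. -/
/-- `f₁(x) = log((eˣ + 3)/(eˣ − 1))` for `x > 0`. -/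
noncomputable def fOne (x : ℝ) : ℝ := Real.log ((Real.exp x + 3) / (Real.exp x - 1))

open Real

lemma exp_gt_one {x : ℝ} (hx : 0 < x) : 1 < exp x := by
  simpa using Real.exp_lt_exp.mpr hx

lemma hasDerivAt_fOne {x : ℝ} (hx : 0 < x) :
    HasDerivAt fOne (-4 * exp x / ((exp x - 1) * (exp x + 3))) x := by
  have h1 : 1 < exp x := exp_gt_one hx
  have hne : exp x - 1 ≠ 0 := by nlinarith
  have hnum : HasDerivAt (fun x => exp x + 3) (exp x) x := (Real.hasDerivAt_exp x).add_const 3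
  have hden : HasDerivAt (fun x => exp x - 1) (exp x) x := (Real.hasDerivAt_exp x).sub_const 1
  have hdiv := hnum.div hden hne
  have hpos : 0 < (exp x + 3) / (exp x - 1) :=
    div_pos (by nlinarith) (by nlinarith)
  have hlog := hdiv.log (ne_of_gt hpos)
  convert hlog using 1
  · funext y; rfl
  simp only [Pi.div_apply]
  field_simp
  ring

lemma fOne_pos {x : ℝ} (hx : 0 < x) : 0 < fOne x := by
  have h1 : 1 < exp x := exp_gt_one hx
  have : 1 < (exp x + 3) / (exp x - 1) := by
    rw [lt_div_iff₀ (by nlinarith)]; nlinarith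
  exact Real.log_pos this

lemma hasDerivAt_F (η : ℝ) {x : ℝ} (hx : 0 < x) :
    HasDerivAt (fun x : ℝ => Real.cosh (fOne x + η) / Real.cosh (x / 2))
      ((sinh (fOne x + η) * (-4 * exp x / ((exp x - 1) * (exp x + 3))) * cosh (x / 2)
        - cosh (fOne x + η) * (sinh (x / 2) * (1 / 2))) / cosh (x / 2) ^ 2) x := by
  have h1 : HasDerivAt (fun x => fOne x + η) (-4 * exp x / ((exp x - 1) * (exp x + 3))) x :=
    (hasDerivAt_fOne hx).add_const η
  have h2 : HasDerivAt (fun x : ℝ => Real.cosh (fOne x + η))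
      (sinh (fOne x + η) * (-4 * exp x / ((exp x - 1) * (exp x + 3)))) x := h1.cosh
  have h3 : HasDerivAt (fun x : ℝ => x / 2) (1 / 2) x := by
    simpa using (hasDerivAt_id x).div_const 2
  have h4 : HasDerivAt (fun x : ℝ => Real.cosh (x / 2)) (sinh (x / 2) * (1 / 2)) x := h3.cosh
  exact h2.div h4 (ne_of_gt (Real.cosh_pos _))

/-- For every `η ≥ 0`, the function `F(x) = cosh(f₁(x) + η)/cosh(x/2)` is strictly monotone
decreasing on `(0, ∞)`. -/
theorem strictAntiOn_cosh_fOne_div_cosh (η : ℝ) (hη : 0 ≤ η) :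
    StrictAntiOn (fun x : ℝ => Real.cosh (fOne x + η) / Real.cosh (x / 2))
      (Set.Ioi (0 : ℝ)) := by
  apply StrictAntiOn.mono (s := Set.Ioi (0:ℝ)) ?_ le_rfl
  apply strictAntiOn_of_deriv_neg (convex_Ioi 0)
  · intro x hx
    exact ((hasDerivAt_F η hx).differentiableAt).continuousAt.continuousWithinAt
  · intro x hx
    rw [interior_Ioi] at hx
    replace hx : 0 < x := hx
    rw [(hasDerivAt_F η hx).deriv]
    have h1 : 1 < exp x := exp_gt_one hx
    have hf : 0 < fOne x + η := by have := fOne_pos hx; linarith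
    have hs : 0 < sinh (fOne x + η) := Real.sinh_pos_iff.mpr hf
    have hsx : 0 < sinh (x / 2) := Real.sinh_pos_iff.mpr (by linarith)
    have hc1 : 0 < cosh (fOne x + η) := Real.cosh_pos _
    have hc2 : 0 < cosh (x / 2) := Real.cosh_pos _
    have hd : -4 * exp x / ((exp x - 1) * (exp x + 3)) < 0 := by
      apply div_neg_of_neg_of_pos
      · nlinarith [Real.exp_pos x]
      · nlinarith
    apply div_neg_of_neg_of_pos
    · nlinarith [mul_pos hs hc2, mul_pos hc1 hsx, mul_neg_of_pos_of_neg (mul_pos hs hc2) hd]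
    · positivity
end

section
/- Let x⁻, x⁺, y⁻, y⁺, z⁺ be positive real numbers with x⁻ ≤ x⁺ and y⁻ ≤ y⁺. Then for all x, y, z with x⁻ ≤ x ≤ x⁺, y⁻ ≤ y ≤ y⁺, and 0 < z ≤ z⁺, we have ω(x, y, z) ≥ ω⁻(x⁻, x⁺, y⁻, y⁺, z⁺), and consequently Ω̄(x, y, z) ≤ Ω̄⁺(x⁻, x⁺, y⁻, y⁺, z⁺). -/
/-- `ω⁻(x⁻, x⁺, y⁻, y⁺, z⁺) = coth(x⁺)·coth(y⁺) − cosh(z⁺)·csch(x⁻)·csch(y⁻)`. -/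
noncomputable def omegaMinus (xm xp ym yp zp : ℝ) : ℝ :=
  (Real.cosh xp / Real.sinh xp) * (Real.cosh yp / Real.sinh yp) -
    Real.cosh zp * ((1 / Real.sinh xm) * (1 / Real.sinh ym))

/-- `Ω̄⁺(x⁻, x⁺, y⁻, y⁺, z⁺) = arccos(min(max(ω⁻(x⁻, x⁺, y⁻, y⁺, z⁺), −1), 1))`. -/
noncomputable def OmegaBarPlus (xm xp ym yp zp : ℝ) : ℝ :=
  Real.arccos (min (max (omegaMinus xm xp ym yp zp) (-1)) 1)

lemma coth_antitone {a b : ℝ} (ha : 0 < a) (hab : a ≤ b) :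
    Real.cosh b / Real.sinh b ≤ Real.cosh a / Real.sinh a := by
  have sa := Real.sinh_pos_iff.2 ha
  have sb := Real.sinh_pos_iff.2 (lt_of_lt_of_le ha hab)
  rw [div_le_div_iff₀ sb sa]
  have h := Real.sinh_sub b a
  have h2 : 0 ≤ Real.sinh (b - a) := Real.sinh_nonneg_iff.2 (by linarith)
  nlinarith

/-- For positive `x⁻ ≤ x⁺`, `y⁻ ≤ y⁺` and `z⁺ > 0`: whenever `x⁻ ≤ x ≤ x⁺`,
`y⁻ ≤ y ≤ y⁺` and `0 < z ≤ z⁺`, we have `ω(x,y,z) ≥ ω⁻(x⁻,x⁺,y⁻,y⁺,z⁺)` and consequently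
`Ω̄(x,y,z) ≤ Ω̄⁺(x⁻,x⁺,y⁻,y⁺,z⁺)`. -/
theorem omegaMinus_le_omega (xm xp ym yp zp : ℝ)
    (hxm : 0 < xm) (hx : xm ≤ xp) (hym : 0 < ym) (hy : ym ≤ yp) (hzp : 0 < zp) :
    ∀ x y z : ℝ, xm ≤ x → x ≤ xp → ym ≤ y → y ≤ yp → 0 < z → z ≤ zp →
      omegaMinus xm xp ym yp zp ≤ omegaFn x y z ∧
        OmegaBar x y z ≤ OmegaBarPlus xm xp ym yp zp := by
  intro x y z hx1 hx2 hy1 hy2 hz1 hz2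
  have hxpos : 0 < x := lt_of_lt_of_le hxm hx1
  have hypos : 0 < y := lt_of_lt_of_le hym hy1
  have sx := Real.sinh_pos_iff.2 hxpos
  have sy := Real.sinh_pos_iff.2 hypos
  have sxm := Real.sinh_pos_iff.2 hxm
  have sym := Real.sinh_pos_iff.2 hym
  have sxp := Real.sinh_pos_iff.2 (lt_of_lt_of_le hxm hx)
  have syp := Real.sinh_pos_iff.2 (lt_of_lt_of_le hym hy)
  have hmain : omegaMinus xm xp ym yp zp ≤ omegaFn x y z := by
    have hω : omegaFn x y z =
        (Real.cosh x / Real.sinh x) * (Real.cosh y / Real.sinh y) -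
          Real.cosh z * ((1 / Real.sinh x) * (1 / Real.sinh y)) := by
      unfold omegaFn; field_simp
    rw [hω]; unfold omegaMinus
    have h1 : (Real.cosh xp / Real.sinh xp) * (Real.cosh yp / Real.sinh yp) ≤
        (Real.cosh x / Real.sinh x) * (Real.cosh y / Real.sinh y) := by
      apply mul_le_mul (coth_antitone hxpos hx2) (coth_antitone hypos hy2)
      · positivity
      · positivity
    have h2 : Real.cosh z * ((1 / Real.sinh x) * (1 / Real.sinh y)) ≤
        Real.cosh zp * ((1 / Real.sinh xm) * (1 / Real.sinh ym)) := by
      have hcz : Real.cosh z ≤ Real.cosh zp := by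
        rw [Real.cosh_le_cosh, abs_of_pos hz1, abs_of_pos hzp]; exact hz2
      have hix : (1:ℝ) / Real.sinh x ≤ 1 / Real.sinh xm :=
        one_div_le_one_div_of_le sxm (Real.sinh_le_sinh.2 hx1)
      have hiy : (1:ℝ) / Real.sinh y ≤ 1 / Real.sinh ym :=
        one_div_le_one_div_of_le sym (Real.sinh_le_sinh.2 hy1)
      have := mul_le_mul hix hiy (by positivity) (by positivity)
      exact mul_le_mul hcz this (by positivity) ((Real.cosh_pos zp).le)
    linarith
  refine ⟨hmain, ?_⟩
  unfold OmegaBar OmegaBarPlus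
  set a := min (max (omegaMinus xm xp ym yp zp) (-1)) 1 with ha
  set b := min (max (omegaFn x y z) (-1)) 1 with hb
  have hab : a ≤ b := min_le_min (max_le_max hmain le_rfl) le_rfl
  have hamem : a ∈ Set.Icc (-1:ℝ) 1 :=
    ⟨le_min (le_max_right _ _) (by norm_num), min_le_right _ _⟩
  have hbmem : b ∈ Set.Icc (-1:ℝ) 1 :=
    ⟨le_min (le_max_right _ _) (by norm_num), min_le_right _ _⟩
  exact Real.strictAntiOn_arccos.antitoneOn hamem hbmem hab
end
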